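/- arXiv:1301.2883 — 2 statements merged into one kernel-verified Lean document; each statement's English description precedes it below -/
import Mathlib

section
/- Let H ∈ (0,1), T > 0, and let σ²_{S^H}(s,t) = |t−s|^{2H} + (s+t)^{2H} − 2^{2H−1}(t^{2H} + s^{2H}) be the incremental variance of sub-fractional Brownian motion. For every φ ∈ Ψ and every δ > 0 with 0 < φ(δ) ≤ T − δ, one has sup_{φ(δ)≤s≤T−δ} sup_{0<h≤δ} |σ²_{S^H}(s,s+h)/h^{2H} − 1| ≤ 2^{2H−1} (δ/φ(δ))^{2−2H} = 2^{2H−1}/(L(δ))^{2−2H}, where L(δ) = φ(δ)/δ. In particular the sub-fractional Brownian motion satisfies condition (C2) with κ = 1 and exponent γ = H. -/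
open Real Set Filter

/-- The class Ψ of continuous functions `φ : (0,T] → [0,∞)` with `φ(h) → 0`,
`L(h) = φ(h)/h → ∞` and `h·L(h)³ → 0` as `h ↓ 0`. -/
def MemPsi (T : ℝ) (φ : ℝ → ℝ) : Prop :=
  ContinuousOn φ (Ioc 0 T) ∧ (∀ h ∈ Ioc (0:ℝ) T, 0 ≤ φ h) ∧
  Tendsto φ (nhdsWithin 0 (Ioi 0)) (nhds 0) ∧
  Tendsto (fun h => φ h / h) (nhdsWithin 0 (Ioi 0)) atTop ∧
  Tendsto (fun h => h * (φ h / h) ^ 3) (nhdsWithin 0 (Ioi 0)) (nhds 0)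

/-- Incremental variance of the sub-fractional Brownian motion with index `H`. -/
noncomputable def sigma2subfBm (H s t : ℝ) : ℝ :=
  |t - s| ^ (2*H) + (s + t) ^ (2*H) - 2 ^ (2*H - 1) * (t ^ (2*H) + s ^ (2*H))

lemma gprime_lip (H : ℝ) (hH : H ∈ Set.Ioo (0:ℝ) 1) (s : ℝ) (hs : 0 < s)
    {x y : ℝ} (hx : x ∈ Ici s) (hy : y ∈ Ici s) :
    |2*H*y^(2*H-1) - 2*H*x^(2*H-1)| ≤ 2 * s^(2*H-2) * |y - x| := by
  obtain ⟨hH0, hH1⟩ := hH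
  have key : ∀ z ∈ Ici s, HasDerivWithinAt (fun x : ℝ => 2*H*x^(2*H-1))
      (2*H*((2*H-1)*z^(2*H-1-1))) (Ici s) z := by
    intro z hz
    have hz0 : z ≠ 0 := (lt_of_lt_of_le hs hz).ne'
    exact ((Real.hasDerivAt_rpow_const (Or.inl hz0)).const_mul (2*H)).hasDerivWithinAt
  have bound : ∀ z ∈ Ici s, ‖2*H*((2*H-1)*z^(2*H-1-1))‖ ≤ 2 * s^(2*H-2) := by
    intro z hz
    have hz0 : 0 < z := lt_of_lt_of_le hs hz
    have h1 : z ^ (2*H-1-1) ≤ s ^ (2*H-2) := by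
      have : (2*H-1-1 : ℝ) = 2*H-2 := by ring
      rw [this]
      exact Real.rpow_le_rpow_of_nonpos hs hz (by linarith)
    have h2 : (0:ℝ) ≤ z ^ (2*H-1-1) := (Real.rpow_pos_of_pos hz0 _).le
    have h3 : |2*H*(2*H-1)| ≤ 2 := by
      rw [abs_mul, abs_of_pos (by linarith : (0:ℝ) < 2*H)]
      rcases le_or_gt (2*H-1) 0 with h | h
      · rw [abs_of_nonpos h]; nlinarith
      · rw [abs_of_pos h]; nlinarith
    calc ‖2*H*((2*H-1)*z^(2*H-1-1))‖ = |2*H*(2*H-1)| * z^(2*H-1-1) := by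
          rw [Real.norm_eq_abs, ← mul_assoc, abs_mul, abs_of_nonneg h2]
      _ ≤ 2 * s^(2*H-2) := by
          have := mul_le_mul h3 h1 h2 (by norm_num : (0:ℝ) ≤ 2)
          linarith [this]
  have := (convex_Ici s).norm_image_sub_le_of_norm_hasDerivWithin_le key bound hx hy
  simpa [Real.norm_eq_abs] using this

lemma midpoint_bound (H : ℝ) (hH : H ∈ Set.Ioo (0:ℝ) 1) (s h : ℝ) (hs : 0 < s) (hh : 0 < h) :
    |s^(2*H) + (s+h)^(2*H) - 2*(s+h/2)^(2*H)| ≤ h^2 * s^(2*H-2) := by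
  set E : ℝ → ℝ := fun u => s^(2*H) + (s+u)^(2*H) - 2*(s+u/2)^(2*H) with hE
  have hK : (0:ℝ) ≤ 2 * s^(2*H-2) := by positivity
  have hderiv : ∀ u ∈ Icc (0:ℝ) h, HasDerivWithinAt E
      (2*H*(s+u)^(2*H-1) - 2*H*(s+u/2)^(2*H-1)) (Icc 0 h) u := by
    intro u hu
    have hu0 : 0 ≤ u := hu.1
    have p1 : (0:ℝ) < s + u := by linarith
    have p2 : (0:ℝ) < s + u/2 := by linarith
    have d1 : HasDerivAt (fun u : ℝ => (s+u)^(2*H)) (2*H*(s+u)^(2*H-1)) u := by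
      have := (Real.hasDerivAt_rpow_const (p := 2*H) (x := s+u) (Or.inl p1.ne')).comp u
        ((hasDerivAt_id u).const_add s)
      simpa [Function.comp_def] using this
    have d2 : HasDerivAt (fun u : ℝ => (s+u/2)^(2*H)) (2*H*(s+u/2)^(2*H-1) * (1/2)) u := by
      have hid : HasDerivAt (fun u : ℝ => s + u/2) (1/2) u := by
        simpa using ((hasDerivAt_id u).div_const 2).const_add s
      exact (Real.hasDerivAt_rpow_const (p := 2*H) (x := s+u/2) (Or.inl p2.ne')).comp u hid
    have : HasDerivAt E (2*H*(s+u)^(2*H-1) - 2*(2*H*(s+u/2)^(2*H-1) * (1/2))) u :=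
      (d1.const_add _).sub (d2.const_mul 2)
    have heq : 2*H*(s+u)^(2*H-1) - 2*(2*H*(s+u/2)^(2*H-1) * (1/2))
        = 2*H*(s+u)^(2*H-1) - 2*H*(s+u/2)^(2*H-1) := by ring
    rw [heq] at this
    exact this.hasDerivWithinAt
  have hbound : ∀ u ∈ Icc (0:ℝ) h,
      ‖2*H*(s+u)^(2*H-1) - 2*H*(s+u/2)^(2*H-1)‖ ≤ 2 * s^(2*H-2) * (h/2) := by
    intro u hu
    have h1 : s + u ∈ Ici s := by simp [hu.1]
    have h2 : s + u/2 ∈ Ici s := by simp; linarith [hu.1]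
    have := gprime_lip H hH s hs h2 h1
    have habs : |s + u - (s + u/2)| = u/2 := by
      rw [abs_of_nonneg (by linarith [hu.1])]; ring
    rw [habs] at this
    rw [Real.norm_eq_abs]
    refine this.trans ?_
    have := hu.2
    nlinarith [hK]
  have key := (convex_Icc (0:ℝ) h).norm_image_sub_le_of_norm_hasDerivWithin_le hderiv hbound
    (left_mem_Icc.2 hh.le) (right_mem_Icc.2 hh.le)
  have hE0 : E 0 = 0 := by simp only [hE, add_zero, zero_div]; ring
  rw [hE0, sub_zero, Real.norm_eq_abs, sub_zero, Real.norm_eq_abs, abs_of_pos hh] at key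
  calc |E h| ≤ 2 * s^(2*H-2) * (h/2) * h := key
    _ = h^2 * s^(2*H-2) := by ring

lemma pointwise_bound (H : ℝ) (hH : H ∈ Set.Ioo (0:ℝ) 1)
    (δ : ℝ) (hδ : 0 < δ) (pφ : ℝ) (hφδ : 0 < pφ)
    (s h : ℝ) (hs : pφ ≤ s) (hh : 0 < h) (hhδ : h ≤ δ) :
    |sigma2subfBm H s (s + h) / h ^ (2*H) - 1| ≤ 2 ^ (2*H - 1) * (δ / pφ) ^ (2 - 2*H) := by
  obtain ⟨hH0, hH1⟩ := hH
  have hs0 : 0 < s := lt_of_lt_of_le hφδ hs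
  have hpow : (0:ℝ) < h ^ (2*H) := Real.rpow_pos_of_pos hh _
  have hNrw : sigma2subfBm H s (s + h)
      = h ^ (2*H) + 2^(2*H-1) * (2*(s+h/2)^(2*H) - ((s+h)^(2*H) + s^(2*H))) := by
    unfold sigma2subfBm
    have h1 : |s + h - s| = h := by rw [show s + h - s = h by ring, abs_of_pos hh]
    have h2 : s + (s + h) = 2 * (s + h/2) := by ring
    have h3 : (2 * (s + h/2)) ^ (2*H) = 2^(2*H) * (s + h/2)^(2*H) :=
      Real.mul_rpow (by norm_num) (by linarith)
    have h4 : (2:ℝ)^(2*H) = 2^(2*H-1) * 2 := by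
      rw [show (2*H) = (2*H-1)+1 by ring, Real.rpow_add (by norm_num : (0:ℝ) < 2),
        Real.rpow_one]
      ring_nf
    rw [h1, h2, h3, h4]; ring
  have key : sigma2subfBm H s (s + h) / h ^ (2*H) - 1
      = 2^(2*H-1) * (2*(s+h/2)^(2*H) - ((s+h)^(2*H) + s^(2*H))) / h ^ (2*H) := by
    rw [hNrw]; field_simp; ring
  rw [key, abs_div, abs_of_pos hpow, abs_mul,
    abs_of_pos (Real.rpow_pos_of_pos (by norm_num : (0:ℝ) < 2) _)]
  have hEabs : |2*(s+h/2)^(2*H) - ((s+h)^(2*H) + s^(2*H))| ≤ h^2 * s^(2*H-2) := by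
    have := midpoint_bound H ⟨hH0, hH1⟩ s h hs0 hh
    rw [← abs_neg] at this
    convert this using 2
    ring
  have step1 : 2^(2*H-1) * |2*(s+h/2)^(2*H) - ((s+h)^(2*H) + s^(2*H))| / h ^ (2*H)
      ≤ 2^(2*H-1) * (h^2 * s^(2*H-2)) / h ^ (2*H) := by
    gcongr
  refine step1.trans ?_
  have h2rw : 2^(2*H-1) * (h^2 * s^(2*H-2)) / h ^ (2*H) = 2^(2*H-1) * (h/s)^(2-2*H) := by
    have e1 : h^(2:ℕ) / h^(2*H) = h^(2-2*H) := by
      rw [← Real.rpow_natCast h 2, ← Real.rpow_sub hh]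
      norm_num
    have e2 : (h/s)^(2-2*H) = h^(2-2*H) * s^(2*H-2) := by
      rw [Real.div_rpow hh.le hs0.le,
        show s^(2*H-2) = (s^(2-2*H))⁻¹ by rw [← Real.rpow_neg hs0.le]; norm_num,
        div_eq_mul_inv]
    rw [e2, ← e1]
    ring
  rw [h2rw]
  apply mul_le_mul_of_nonneg_left ?_ (Real.rpow_pos_of_pos (by norm_num) _).le
  apply Real.rpow_le_rpow (by positivity) ?_ (by linarith)
  exact div_le_div₀ hδ.le hhδ hφδ hs

/-- Quantitative form of condition (C2) (with `κ = 1`, `γ = H`)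
for the sub-fractional Brownian motion. -/
theorem subfBm_C2_bound (H T : ℝ) (hH : H ∈ Set.Ioo (0:ℝ) 1) (hT : 0 < T)
    (φ : ℝ → ℝ) (hφ : MemPsi T φ) (δ : ℝ) (hδ : 0 < δ)
    (hφδ : 0 < φ δ) (hφδT : φ δ ≤ T - δ) :
    (⨆ s ∈ Icc (φ δ) (T - δ), ⨆ h ∈ Ioc (0:ℝ) δ,
        |sigma2subfBm H s (s + h) / h ^ (2*H) - 1|)
      ≤ 2 ^ (2*H - 1) * (δ / φ δ) ^ (2 - 2*H) := by
  have hR : (0:ℝ) ≤ 2 ^ (2*H - 1) * (δ / φ δ) ^ (2 - 2*H) := by positivity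
  refine Real.iSup_le (fun s => Real.iSup_le (fun hs => Real.iSup_le (fun h =>
    Real.iSup_le (fun hh => ?_) hR) hR) hR) hR
  exact pointwise_bound H hH δ hδ (φ δ) hφδ s h hs.1 hh.1 hh.2
end

section
/- Let H ∈ (1/2,1), T > 0, and let σ²_{S^H}(s,t) = |t−s|^{2H} + (s+t)^{2H} − 2^{2H−1}(t^{2H} + s^{2H}) be the incremental variance of sub-fractional Brownian motion. Then for every δ with 0 < δ ≤ T/2, sup_{0≤s≤T−δ} sup_{0<h≤δ} h^{−2H} |σ²_{S^H}(s,s+h) − h^{2H}| ≥ H(2H−1)(2^{2H−1}−1) 3^{2H−2}. Consequently, in condition (C2) for the sub-fractional Brownian motion the lower cutoff φ(δ) cannot be replaced by 0. -/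
open Real Set Filter

noncomputable def subfPhi (u a : ℝ) : ℝ :=
  2 ^ (u-1) * ((a+1) ^ u + a ^ u) - (2*a+1) ^ u

lemma subfPhi_hasDerivAt (u : ℝ) (hu : 1 ≤ u) {a : ℝ} (ha : 0 ≤ a) :
    HasDerivAt (subfPhi u)
      (2 ^ (u-1) * (u * (a+1) ^ (u-1) + u * a ^ (u-1)) - u * (2*a+1) ^ (u-1) * 2) a := by
  have h1 : HasDerivAt (fun x : ℝ => (x+1) ^ u) (u * (a+1) ^ (u-1) * 1) a := by
    exact (Real.hasDerivAt_rpow_const (x := a+1) (p := u) (Or.inl (by positivity))).comp a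
      ((hasDerivAt_id a).add_const 1)
  have h2 : HasDerivAt (fun x : ℝ => x ^ u) (u * a ^ (u-1)) a :=
    Real.hasDerivAt_rpow_const (Or.inr hu)
  have h3 : HasDerivAt (fun x : ℝ => (2*x+1) ^ u) (u * (2*a+1) ^ (u-1) * 2) a := by
    exact (Real.hasDerivAt_rpow_const (x := 2*a+1) (p := u) (Or.inl (by positivity))).comp a
      (show HasDerivAt (fun x : ℝ => 2*x+1) 2 a by simpa using ((hasDerivAt_id a).const_mul 2).add_const 1)
  have := (((h1.add h2).const_mul ((2:ℝ) ^ (u-1))).sub h3)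
  simp only [mul_one] at this
  exact this

lemma subfPhi_antitoneOn (u : ℝ) (hu1 : 1 < u) (hu2 : u < 2) :
    AntitoneOn (subfPhi u) (Ici (0:ℝ)) := by
  have hderiv : ∀ a : ℝ, 0 ≤ a → HasDerivAt (subfPhi u)
      (2 ^ (u-1) * (u * (a+1) ^ (u-1) + u * a ^ (u-1)) - u * (2*a+1) ^ (u-1) * 2) a :=
    fun a ha => subfPhi_hasDerivAt u hu1.le ha
  apply antitoneOn_of_deriv_nonpos (convex_Ici 0)
  · exact fun a ha => (hderiv a ha).continuousAt.continuousWithinAt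
  · rw [interior_Ici]
    exact fun a ha => ((hderiv a (le_of_lt ha)).differentiableAt).differentiableWithinAt
  · rw [interior_Ici]
    intro a ha
    have ha' : (0:ℝ) ≤ a := le_of_lt ha
    rw [(hderiv a ha').deriv]
    -- concavity midpoint bound for exponent u-1 ∈ (0,1)
    have hp0 : (0:ℝ) < u - 1 := by linarith
    have hp1 : u - 1 < 1 := by linarith
    have hconc := (Real.strictConcaveOn_rpow hp0 hp1).concaveOn
    have hmid : (1/2 : ℝ) * a ^ (u-1) + (1/2 : ℝ) * (a+1) ^ (u-1)
        ≤ (a + 1/2) ^ (u-1) := by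
      have h := hconc.2 (mem_Ici.2 ha') (mem_Ici.2 (by linarith : (0:ℝ) ≤ a+1))
        (by norm_num : (0:ℝ) ≤ 1/2) (by norm_num : (0:ℝ) ≤ 1/2) (by norm_num)
      simp only [smul_eq_mul] at h
      rwa [show (1/2:ℝ) * a + 1/2 * (a+1) = a + 1/2 by ring] at h
    have heq : (2*a+1) ^ (u-1) = 2 ^ (u-1) * (a + 1/2) ^ (u-1) := by
      rw [show (2*a+1 : ℝ) = 2*(a+1/2) by ring,
        Real.mul_rpow (by norm_num) (by linarith)]
    have hc : (0:ℝ) < 2 ^ (u-1) := Real.rpow_pos_of_pos (by norm_num) _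
    have hu0 : (0:ℝ) < u := by linarith
    rw [heq]
    nlinarith [mul_pos hu0 hc]

lemma subfGap_nonneg (u s h : ℝ) (hu : 1 ≤ u) (hs : 0 ≤ s) (hh : 0 ≤ h) :
    (2*s+h) ^ u ≤ 2 ^ (u-1) * ((s+h) ^ u + s ^ u) := by
  have hconv := convexOn_rpow hu
  have h2 := hconv.2 (mem_Ici.2 hs) (mem_Ici.2 (by linarith : (0:ℝ) ≤ s+h))
    (by norm_num : (0:ℝ) ≤ 1/2) (by norm_num : (0:ℝ) ≤ 1/2) (by norm_num)
  simp only [smul_eq_mul] at h2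
  rw [show (1/2:ℝ) * s + 1/2 * (s+h) = s + h/2 by ring] at h2
  have heq : (2*s+h) ^ u = 2 ^ u * (s + h/2) ^ u := by
    rw [show (2*s+h : ℝ) = 2*(s+h/2) by ring,
      Real.mul_rpow (by norm_num) (by linarith)]
  have h2u : (2:ℝ) ^ u = 2 ^ (u-1) * 2 := by
    rw [show u = (u-1) + 1 by ring, Real.rpow_add (by norm_num), Real.rpow_one]
    ring_nf
  rw [heq, h2u]
  nlinarith [Real.rpow_pos_of_pos (show (0:ℝ) < 2 by norm_num) (u-1)]

lemma subfGap_le (u s h : ℝ) (hu1 : 1 < u) (hu2 : u < 2) (hs : 0 ≤ s) (hh : 0 < h) :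
    2 ^ (u-1) * ((s+h) ^ u + s ^ u) - (2*s+h) ^ u ≤ (2 ^ (u-1) - 1) * h ^ u := by
  have hphi : subfPhi u (s/h) ≤ subfPhi u 0 :=
    subfPhi_antitoneOn u hu1 hu2 (mem_Ici.2 le_rfl) (mem_Ici.2 (by positivity))
      (by positivity)
  have hphi0 : subfPhi u 0 = 2 ^ (u-1) - 1 := by
    simp [subfPhi, Real.zero_rpow (by linarith : u ≠ 0), Real.one_rpow]
  have hhu : (0:ℝ) < h ^ u := Real.rpow_pos_of_pos hh _
  have hscale : h ^ u * subfPhi u (s/h)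
      = 2 ^ (u-1) * ((s+h) ^ u + s ^ u) - (2*s+h) ^ u := by
    have e1 : h ^ u * (s/h + 1) ^ u = (s+h) ^ u := by
      rw [← Real.mul_rpow hh.le (by positivity)]
      congr 1; field_simp
    have e2 : h ^ u * (s/h) ^ u = s ^ u := by
      rw [← Real.mul_rpow hh.le (by positivity)]
      congr 1; field_simp
    have e3 : h ^ u * (2*(s/h)+1) ^ u = (2*s+h) ^ u := by
      rw [← Real.mul_rpow hh.le (by positivity)]
      congr 1; field_simp
    simp only [subfPhi]
    calc h ^ u * (2 ^ (u-1) * ((s/h+1) ^ u + (s/h) ^ u) - (2*(s/h)+1) ^ u)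
        = 2 ^ (u-1) * (h ^ u * (s/h+1) ^ u + h ^ u * (s/h) ^ u)
          - h ^ u * (2*(s/h)+1) ^ u := by ring
      _ = _ := by rw [e1, e2, e3]
  rw [hphi0] at hphi
  calc 2 ^ (u-1) * ((s+h) ^ u + s ^ u) - (2*s+h) ^ u
      = h ^ u * subfPhi u (s/h) := hscale.symm
    _ ≤ h ^ u * (2 ^ (u-1) - 1) := mul_le_mul_of_nonneg_left hphi hhu.le
    _ = (2 ^ (u-1) - 1) * h ^ u := by ring


/-- For `H ∈ (1/2,1)` the normalized deviation of the incremental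
variance of sub-fractional Brownian motion from `h^{2H}`, taken over all
`s ∈ [0, T−δ]` and `0 < h ≤ δ`, is bounded below by a positive constant;
hence in condition (C2) the lower cutoff `φ(δ)` cannot be replaced by `0`. -/
theorem subfBm_C2_cutoff_necessary (H T : ℝ) (hH : H ∈ Set.Ioo (1/2 : ℝ) 1) (hT : 0 < T)
    (δ : ℝ) (hδ : 0 < δ) (hδT : δ ≤ T / 2) :
    H * (2*H - 1) * (2 ^ (2*H - 1) - 1) * 3 ^ (2*H - 2)
      ≤ ⨆ s ∈ Icc (0:ℝ) (T - δ), ⨆ h ∈ Ioc (0:ℝ) δ,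
          h ^ (-(2*H)) * |sigma2subfBm H s (s + h) - h ^ (2*H)| := by
  obtain ⟨hH1, hH2⟩ := hH
  have hu1 : 1 < 2*H := by linarith
  have hu2 : 2*H < 2 := by linarith
  have hone : (1:ℝ) ≤ 2 ^ (2*H-1) := by
    rw [show (1:ℝ) = (2:ℝ) ^ (0:ℝ) by simp]
    exact Real.rpow_le_rpow_of_exponent_le one_le_two (by linarith)
  have hB0 : (0:ℝ) ≤ 2 ^ (2*H-1) - 1 := by linarith
  -- pointwise upper bound
  have key1 : ∀ s : ℝ, 0 ≤ s → ∀ h : ℝ, 0 < h →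
      h ^ (-(2*H)) * |sigma2subfBm H s (s + h) - h ^ (2*H)| ≤ 2 ^ (2*H-1) - 1 := by
    intro s hs h hh
    have hgapnn := subfGap_nonneg (2*H) s h hu1.le hs hh.le
    have hdiff : sigma2subfBm H s (s+h) - h ^ (2*H)
        = (2*s+h) ^ (2*H) - 2 ^ (2*H-1) * ((s+h) ^ (2*H) + s ^ (2*H)) := by
      simp only [sigma2subfBm]
      rw [show s + h - s = h by ring, abs_of_pos hh, show s + (s+h) = 2*s+h by ring]
      ring
    have habs : |sigma2subfBm H s (s+h) - h ^ (2*H)|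
        = 2 ^ (2*H-1) * ((s+h) ^ (2*H) + s ^ (2*H)) - (2*s+h) ^ (2*H) := by
      rw [hdiff, abs_of_nonpos (by linarith)]; ring
    have hle : |sigma2subfBm H s (s+h) - h ^ (2*H)| ≤ (2 ^ (2*H-1) - 1) * h ^ (2*H) := by
      rw [habs]; exact subfGap_le (2*H) s h hu1 hu2 hs hh
    have hinvnn : (0:ℝ) ≤ h ^ (-(2*H)) := (Real.rpow_pos_of_pos hh _).le
    calc h ^ (-(2*H)) * |sigma2subfBm H s (s + h) - h ^ (2*H)|
        ≤ h ^ (-(2*H)) * ((2 ^ (2*H-1) - 1) * h ^ (2*H)) :=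
          mul_le_mul_of_nonneg_left hle hinvnn
      _ = (2 ^ (2*H-1) - 1) * (h ^ (-(2*H)) * h ^ (2*H)) := by ring
      _ = 2 ^ (2*H-1) - 1 := by
          rw [← Real.rpow_add hh, neg_add_cancel, Real.rpow_zero, mul_one]
  -- value at the witness (s, h) = (0, δ)
  have key2 : δ ^ (-(2*H)) * |sigma2subfBm H 0 (0 + δ) - δ ^ (2*H)| = 2 ^ (2*H-1) - 1 := by
    have hzero : (0:ℝ) ^ (2*H) = 0 := Real.zero_rpow (by linarith)
    have h2 : sigma2subfBm H 0 (0+δ) - δ ^ (2*H) = (1 - 2 ^ (2*H-1)) * δ ^ (2*H) := by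
      simp only [sigma2subfBm, zero_add, sub_zero, abs_of_pos hδ, hzero]
      ring
    have hδu : (0:ℝ) < δ ^ (2*H) := Real.rpow_pos_of_pos hδ _
    rw [h2, abs_of_nonpos (by nlinarith), show -((1 - 2 ^ (2*H-1)) * δ ^ (2*H))
        = (2 ^ (2*H-1) - 1) * δ ^ (2*H) by ring]
    rw [show δ ^ (-(2*H)) * ((2 ^ (2*H-1) - 1) * δ ^ (2*H))
        = (2 ^ (2*H-1) - 1) * (δ ^ (-(2*H)) * δ ^ (2*H)) by ring,
      ← Real.rpow_add hδ, neg_add_cancel, Real.rpow_zero, mul_one]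
  -- the constant is at most the witness value
  have hC : H * (2*H - 1) * (2 ^ (2*H - 1) - 1) * 3 ^ (2*H - 2) ≤ 2 ^ (2*H-1) - 1 := by
    have h3 : (3:ℝ) ^ (2*H-2) ≤ 1 :=
      Real.rpow_le_one_of_one_le_of_nonpos (by norm_num) (by linarith)
    have h3p : (0:ℝ) < 3 ^ (2*H-2) := Real.rpow_pos_of_pos (by norm_num) _
    have ha0 : (0:ℝ) ≤ H * (2*H-1) := by nlinarith
    have ha1 : H * (2*H-1) ≤ 1 := by nlinarith
    have haX : (0:ℝ) ≤ H * (2*H-1) * (2 ^ (2*H-1) - 1) := mul_nonneg ha0 hB0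
    calc H * (2*H - 1) * (2 ^ (2*H - 1) - 1) * 3 ^ (2*H - 2)
        ≤ H * (2*H - 1) * (2 ^ (2*H - 1) - 1) * 1 :=
          mul_le_mul_of_nonneg_left h3 haX
      _ = H * (2*H-1) * (2 ^ (2*H-1) - 1) := by ring
      _ ≤ 1 * (2 ^ (2*H-1) - 1) := by
          rw [one_mul]
          calc H * (2*H-1) * (2 ^ (2*H-1) - 1) ≤ 1 * (2 ^ (2*H-1) - 1) :=
            mul_le_mul_of_nonneg_right ha1 hB0
          _ = _ := one_mul _
      _ = 2 ^ (2*H-1) - 1 := one_mul _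
  -- sup manipulations
  have hinner_le : ∀ s : ℝ, 0 ≤ s →
      (⨆ h ∈ Ioc (0:ℝ) δ, h ^ (-(2*H)) * |sigma2subfBm H s (s + h) - h ^ (2*H)|)
        ≤ 2 ^ (2*H-1) - 1 :=
    fun s hs => Real.iSup_le
      (fun h => Real.iSup_le (fun hh => key1 s hs h hh.1) hB0) hB0
  have hbdd : BddAbove (range fun s : ℝ => ⨆ _ : s ∈ Icc (0:ℝ) (T - δ),
      ⨆ h ∈ Ioc (0:ℝ) δ, h ^ (-(2*H)) * |sigma2subfBm H s (s + h) - h ^ (2*H)|) := by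
    refine ⟨2 ^ (2*H-1) - 1, ?_⟩
    rintro x ⟨s, rfl⟩
    exact Real.iSup_le (fun hs => hinner_le s hs.1) hB0
  have h0mem : (0:ℝ) ∈ Icc (0:ℝ) (T - δ) := ⟨le_rfl, by linarith⟩
  have step1 : (⨆ h ∈ Ioc (0:ℝ) δ, h ^ (-(2*H)) * |sigma2subfBm H 0 (0 + h) - h ^ (2*H)|)
      ≤ ⨆ s ∈ Icc (0:ℝ) (T - δ), ⨆ h ∈ Ioc (0:ℝ) δ,
          h ^ (-(2*H)) * |sigma2subfBm H s (s + h) - h ^ (2*H)| := by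
    have := le_ciSup hbdd (0:ℝ)
    rwa [ciSup_pos h0mem] at this
  have hbdd2 : BddAbove (range fun h : ℝ => ⨆ _ : h ∈ Ioc (0:ℝ) δ,
      h ^ (-(2*H)) * |sigma2subfBm H 0 (0 + h) - h ^ (2*H)|) := by
    refine ⟨2 ^ (2*H-1) - 1, ?_⟩
    rintro x ⟨h, rfl⟩
    exact Real.iSup_le (fun hh => key1 0 le_rfl h hh.1) hB0
  have step2 : δ ^ (-(2*H)) * |sigma2subfBm H 0 (0 + δ) - δ ^ (2*H)|
      ≤ ⨆ h ∈ Ioc (0:ℝ) δ, h ^ (-(2*H)) * |sigma2subfBm H 0 (0 + h) - h ^ (2*H)| := by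
    have := le_ciSup hbdd2 δ
    rwa [ciSup_pos (show δ ∈ Ioc (0:ℝ) δ from ⟨hδ, le_rfl⟩)] at this
  calc H * (2*H - 1) * (2 ^ (2*H - 1) - 1) * 3 ^ (2*H - 2)
      ≤ 2 ^ (2*H-1) - 1 := hC
    _ = δ ^ (-(2*H)) * |sigma2subfBm H 0 (0 + δ) - δ ^ (2*H)| := key2.symm
    _ ≤ _ := le_trans step2 step1
end
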